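/- For any pair of k-Lipschitz hypotheses h, h' which are ε-close to f on ℒK in a loss L that is symmetric, μ-Lipschitz, increasing in |y−y'|, satisfies the triangle inequality, and satisfies L(y,y') ≥ ν|y−y'|, we have for each x: L(h(x), h'(x)) ≤ L(d̃₊(x,ℒK), d̃₋(x,ℒK)) + 2με/ν. -/

import Mathlib

/-- Pointwise bound in terms of the envelopes:
`L(h(x), h'(x)) ≤ L(d̃₊(x), d̃₋(x)) + 2με/ν`. -/
theorem stmt8 {X : Type*} [MetricSpace X] (k μ ε ν : ℝ) (L : ℝ → ℝ → ℝ)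
    (hε : 0 ≤ ε) (hν : 0 < ν)
    (hLnonneg : ∀ y y', 0 ≤ L y y')
    (hLsymm : ∀ y y', L y y' = L y' y)
    (hLtri : ∀ a b c, L a c ≤ L a b + L b c)
    (hLlip : ∀ y y', L y y' ≤ μ * |y - y'|)
    (hLlow : ∀ y y', ν * |y - y'| ≤ L y y')
    (hLmono : ∀ a b c d : ℝ, |a - b| ≤ |c - d| → L a b ≤ L c d)
    (f h h' : X → ℝ)
    (hh : ∀ a b, |h a - h b| ≤ k * dist a b)
    (hh' : ∀ a b, |h' a - h' b| ≤ k * dist a b)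
    (LK : Finset X) (hLK : LK.Nonempty)
    (he1 : ∀ x' ∈ LK, L (h x') (f x') < ε)
    (he2 : ∀ x' ∈ LK, L (h' x') (f x') < ε)
    (x : X) :
    L (h x) (h' x) ≤
      L (LK.inf' hLK (fun x' => f x' + k * dist x x'))
        (LK.sup' hLK (fun x' => f x' - k * dist x x'))
      + 2 * μ * ε / ν := by
  set A := LK.inf' hLK (fun x' => f x' + k * dist x x') with hA
  set B := LK.sup' hLK (fun x' => f x' - k * dist x x') with hB
  have hcl : ∀ (g : X → ℝ), (∀ x' ∈ LK, L (g x') (f x') < ε) →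
      ∀ x' ∈ LK, |g x' - f x'| ≤ ε / ν := by
    intro g hg x' hx'
    rw [le_div_iff₀ hν]
    nlinarith [hLlow (g x') (f x'), (hg x' hx').le]
  have key : ∀ (g : X → ℝ), (∀ a b, |g a - g b| ≤ k * dist a b) →
      (∀ x' ∈ LK, |g x' - f x'| ≤ ε / ν) → B - ε / ν ≤ g x ∧ g x ≤ A + ε / ν := by
    intro g hg hgf
    constructor
    · rw [sub_le_iff_le_add, hB]
      apply Finset.sup'_le
      intro x' hx'
      have h1 := abs_le.1 (hg x x')
      have h2 := abs_le.1 (hgf x' hx')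
      linarith
    · rw [← sub_le_iff_le_add, hA]
      apply Finset.le_inf'
      intro x' hx'
      have h1 := abs_le.1 (hg x x')
      have h2 := abs_le.1 (hgf x' hx')
      linarith
  obtain ⟨hB1, hA1⟩ := key h hh (hcl h he1)
  obtain ⟨hB2, hA2⟩ := key h' hh' (hcl h' he2)
  have hεν : 0 ≤ ε / ν := div_nonneg hε hν.le
  set t := |A - B| with ht
  have htn : 0 ≤ t := abs_nonneg _
  have habs : |h x - h' x| ≤ t + 2 * (ε / ν) := by
    have h1 : A - B ≤ t := le_abs_self _
    have h2 : -(A - B) ≤ t := neg_le_abs _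
    rw [abs_le]
    constructor <;> linarith
  have step1 : L (h x) (h' x) ≤ L 0 (t + 2 * (ε / ν)) := by
    have e : |(0:ℝ) - (t + 2 * (ε / ν))| = t + 2 * (ε / ν) := by
      rw [zero_sub, abs_neg]; exact abs_of_nonneg (by linarith)
    exact hLmono _ _ _ _ (habs.trans e.ge)
  have step2 : L 0 (t + 2 * (ε / ν)) ≤ L 0 t + L t (t + 2 * (ε / ν)) := hLtri _ _ _
  have step3 : L 0 t ≤ L A B := hLmono 0 t A B (by rw [zero_sub, abs_neg, abs_abs])
  have step4 : L t (t + 2 * (ε / ν)) ≤ μ * (2 * (ε / ν)) := by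
    have h1 := hLlip t (t + 2 * (ε / ν))
    have h2 : |t - (t + 2 * (ε / ν))| = 2 * (ε / ν) := by
      rw [abs_sub_comm, add_sub_cancel_left, abs_of_nonneg (by linarith)]
    rw [h2] at h1
    exact h1
  have heq : μ * (2 * (ε / ν)) = 2 * μ * ε / ν := by field_simp
  linarith
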